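/- Suppose |a|_p < α = β and |d|_p = α for f(x) = (ax²+bx)/(x²+dx+b) on ℂ_p. If |b+(a-d)d|_p < α², then the fixed point x₂ = a-d is attracting: for all x with 0 < |x-x₂|_p < α, |f(x)-x₂|_p < |x-x₂|_p, and every such x satisfies fⁿ(x) → x₂. -/

import Mathlib

open IsUltrametricDist Filter

private lemma ultra_add_eq_left {K : Type*} [NormedField K] [IsUltrametricDist K]
    {x y : K} (h : ‖y‖ < ‖x‖) : ‖x + y‖ = ‖x‖ := by
  rw [norm_add_eq_max_of_norm_ne_norm (ne_of_gt h), max_eq_left h.le]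

/-- Case `|a| < α = β`, `|d| = α`, `|b+(a-d)d| < α²`: `x₂ = a - d` is
attracting; every `x` with `0 < |x - x₂| < α` satisfies
`|f(x) - x₂| < |x - x₂|` and `fⁿ(x) → x₂`. -/
theorem stmt7 {K : Type*} [NontriviallyNormedField K] [IsAlgClosed K]
    [IsUltrametricDist K] (a b d z₁ z₂ : K) (hab : a*b ≠ 0) (had : a ≠ d)
    (hsum : z₁ + z₂ = -d) (hprod : z₁ * z₂ = b)
    (hβ : ‖z₂‖ = ‖z₁‖) (ha : ‖a‖ < ‖z₁‖) (hd : ‖d‖ = ‖z₁‖)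
    (hmult : ‖b + (a - d)*d‖ < ‖z₁‖^2) :
    ∀ x : K, 0 < ‖x - (a - d)‖ → ‖x - (a - d)‖ < ‖z₁‖ →
      ‖(a*x^2 + b*x)/(x^2 + d*x + b) - (a - d)‖ < ‖x - (a - d)‖ ∧
      Filter.Tendsto
        (fun n => (fun y : K => (a*y^2 + b*y)/(y^2 + d*y + b))^[n] x)
        Filter.atTop (nhds (a - d)) := by
  set α : ℝ := ‖z₁‖ with hαdef
  set x₂ : K := a - d with hx₂def
  set f : K → K := fun y : K => (a*y^2 + b*y)/(y^2 + d*y + b) with hf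
  set e : K := b + (a - d)*d with he
  have hα0 : (0:ℝ) < α := (norm_nonneg a).trans_lt ha
  -- ‖x₂‖ = α
  have hx2 : ‖x₂‖ = α := by
    rw [hx₂def, sub_eq_neg_add, ultra_add_eq_left (by rwa [norm_neg, hd]), norm_neg, hd]
  -- product of distances from x₂ to the roots
  have hfact : (x₂ - z₁) * (x₂ - z₂) = x₂^2 + e := by
    rw [hx₂def, he]; linear_combination (-(a - d)) * hsum + hprod
  have hEnorm : ‖(x₂ - z₁) * (x₂ - z₂)‖ = α^2 := by
    rw [hfact]
    have h2 : ‖x₂^2‖ = α^2 := by rw [norm_pow, hx2]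
    rw [ultra_add_eq_left (by rw [h2]; exact hmult), h2]
  have hu1 : ‖x₂ - z₁‖ ≤ α := by
    rw [sub_eq_add_neg]
    refine (norm_add_le_max _ _).trans ?_
    rw [norm_neg, hx2]; exact max_le le_rfl le_rfl
  have hv1 : ‖x₂ - z₂‖ ≤ α := by
    rw [sub_eq_add_neg]
    refine (norm_add_le_max _ _).trans ?_
    rw [norm_neg, hx2, hβ]; exact max_le le_rfl le_rfl
  have huv : ‖x₂ - z₁‖ * ‖x₂ - z₂‖ = α^2 := by rw [← norm_mul, hEnorm]
  have hu : ‖x₂ - z₁‖ = α := by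
    refine le_antisymm hu1 ?_
    nlinarith [mul_le_mul_of_nonneg_left hv1 (norm_nonneg (x₂ - z₁))]
  have hv : ‖x₂ - z₂‖ = α := by
    refine le_antisymm hv1 ?_
    nlinarith [mul_le_mul_of_nonneg_right hu1 (norm_nonneg (x₂ - z₂))]
  -- key identity for any y in the ball
  have key : ∀ y : K, ‖y - x₂‖ < α →
      ‖f y - x₂‖ = ‖d*y + b‖ / α^2 * ‖y - x₂‖ := by
    intro y hy
    have hyz1 : ‖y - z₁‖ = α := by
      rw [show y - z₁ = (x₂ - z₁) + (y - x₂) by ring,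
        ultra_add_eq_left (by rwa [hu]), hu]
    have hyz2 : ‖y - z₂‖ = α := by
      rw [show y - z₂ = (x₂ - z₂) + (y - x₂) by ring,
        ultra_add_eq_left (by rwa [hv]), hv]
    have hD : y^2 + d*y + b = (y - z₁) * (y - z₂) := by
      linear_combination y * hsum - hprod
    have hDne : y^2 + d*y + b ≠ 0 := by
      rw [hD]
      apply mul_ne_zero
      · intro h; rw [h, norm_zero] at hyz1; linarith
      · intro h; rw [h, norm_zero] at hyz2; linarith
    have hid : f y - x₂ = ((y - x₂) * (d*y + b)) / (y^2 + d*y + b) := by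
      rw [hf]
      simp only
      rw [hx₂def]
      rw [eq_div_iff hDne, sub_mul, div_mul_cancel₀ _ hDne]
      ring
    have hDval : ‖y^2 + d*y + b‖ = α^2 := by
      rw [hD, norm_mul, hyz1, hyz2, sq]
    rw [hid, norm_div, norm_mul, hDval]
    ring
  have hdb : ∀ y : K, ‖d*y + b‖ ≤ max (α * ‖y - x₂‖) ‖e‖ := by
    intro y
    have : d*y + b = d*(y - x₂) + e := by rw [hx₂def, he]; ring
    rw [this]
    refine (norm_add_le_max _ _).trans ?_
    rw [norm_mul, hd]
  intro x hx0 hxα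
  constructor
  · -- contraction at x
    rw [key x hxα]
    have h1 : ‖d*x + b‖ < α^2 := by
      refine lt_of_le_of_lt (hdb x) (max_lt ?_ ?_)
      · calc α * ‖x - x₂‖ < α * α := by exact mul_lt_mul_of_pos_left hxα hα0
          _ = α^2 := (sq α).symm
      · exact hmult
    have : ‖d*x + b‖ / α^2 < 1 := (div_lt_one (by positivity)).mpr h1
    calc ‖d*x + b‖ / α^2 * ‖x - x₂‖ < 1 * ‖x - x₂‖ :=
          mul_lt_mul_of_pos_right this hx0
      _ = ‖x - x₂‖ := one_mul _
  · -- convergence of iterates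
    set r : ℝ := ‖x - x₂‖ with hr
    set q : ℝ := max (r / α) (‖e‖ / α^2) with hq
    have hq0 : 0 ≤ q := le_trans (by positivity) (le_max_left _ _)
    have hq1 : q < 1 := by
      apply max_lt
      · exact (div_lt_one hα0).mpr hxα
      · exact (div_lt_one (by positivity)).mpr hmult
    have step : ∀ y : K, ‖y - x₂‖ ≤ r → ‖f y - x₂‖ ≤ q * ‖y - x₂‖ := by
      intro y hy
      have hyα : ‖y - x₂‖ < α := lt_of_le_of_lt hy hxα
      rw [key y hyα]
      have h1 : ‖d*y + b‖ ≤ q * α^2 := by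
        refine (hdb y).trans (max_le ?_ ?_)
        · have hrq : r ≤ q * α := (div_le_iff₀ hα0).mp (le_max_left _ _)
          nlinarith [mul_le_mul_of_nonneg_left hy hα0.le,
            mul_le_mul_of_nonneg_left hrq hα0.le]
        · exact (div_le_iff₀ (by positivity)).mp (le_max_right _ _)
      calc ‖d*y + b‖ / α^2 * ‖y - x₂‖ ≤ (q * α^2) / α^2 * ‖y - x₂‖ := by
            gcongr
        _ = q * ‖y - x₂‖ := by field_simp
    have iter : ∀ n : ℕ, ‖f^[n] x - x₂‖ ≤ q^n * r := by
      intro n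
      induction n with
      | zero => simp [hr]
      | succ n ih =>
        have hle : ‖f^[n] x - x₂‖ ≤ r := by
          refine ih.trans ?_
          calc q^n * r ≤ 1 * r :=
                mul_le_mul_of_nonneg_right (pow_le_one₀ hq0 hq1.le) hx0.le
            _ = r := one_mul r
        rw [Function.iterate_succ_apply']
        calc ‖f (f^[n] x) - x₂‖ ≤ q * ‖f^[n] x - x₂‖ := step _ hle
          _ ≤ q * (q^n * r) := mul_le_mul_of_nonneg_left ih hq0
          _ = q^(n+1) * r := by ring
    have hlim : Tendsto (fun n : ℕ => ‖f^[n] x - x₂‖) atTop (nhds 0) := by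
      have hgeo : Tendsto (fun n : ℕ => q^n * r) atTop (nhds 0) := by
        simpa using (tendsto_pow_atTop_nhds_zero_of_lt_one hq0 hq1).mul_const r
      exact squeeze_zero (fun n => norm_nonneg _) iter hgeo
    exact tendsto_iff_norm_sub_tendsto_zero.mpr hlim
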